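/- For any quantum state ρ on ℂ² ⊗ ℂ² and any observables A₀, A₁, B₀, B₁ with eigenvalues in [-1,1] (Hermitian operators with operator norm ≤ 1), the expectation Tr(ρ (A₀⊗B₀ + A₀⊗B₁ + A₁⊗B₀ − A₁⊗B₁)) is at most 2√2 (Tsirelson's bound). -/

import Mathlib

open Matrix Kronecker
open scoped ComplexOrder

section TsirelsonAux

variable {m n : Type*} [Fintype m] [Fintype n] [DecidableEq m] [DecidableEq n]

set_option linter.unusedSectionVars false

lemma trace_nonneg_of_posSemidef {M : Matrix n n ℂ} (hM : M.PosSemidef) : 0 ≤ M.trace := by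
  rw [Matrix.trace]
  refine Finset.sum_nonneg fun i _ => ?_
  have h := hM.dotProduct_mulVec_nonneg (Pi.single i 1)
  simpa [dotProduct, Matrix.mulVec, Pi.single_apply, apply_ite (star : ℂ → ℂ),
    Finset.sum_ite_eq'] using h

open scoped MatrixOrder in
lemma trace_mul_nonneg {ρ M : Matrix n n ℂ} (hρ : ρ.PosSemidef) (hM : M.PosSemidef) :
    0 ≤ (ρ * M).trace := by
  have h1 : ρ * M = CFC.sqrt ρ * (CFC.sqrt ρ * M) := by rw [← mul_assoc, CFC.sqrt_mul_sqrt_self ρ hρ.nonneg]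
  have h2 : (ρ * M).trace = (CFC.sqrt ρ * M * CFC.sqrt ρ).trace := by
    rw [h1, Matrix.trace_mul_comm]
  rw [h2]
  refine trace_nonneg_of_posSemidef ?_
  have := hM.mul_mul_conjTranspose_same (CFC.sqrt ρ)
  rwa [(CFC.sqrt_nonneg ρ).posSemidef.1.eq] at this

lemma kron_conjTranspose (A : Matrix m m ℂ) (B : Matrix n n ℂ) :
    (A ⊗ₖ B)ᴴ = Aᴴ ⊗ₖ Bᴴ := by
  ext ⟨i, j⟩ ⟨k, l⟩
  simp [Matrix.conjTranspose_apply, Matrix.kroneckerMap_apply, mul_comm]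

lemma kron_posSemidef {A : Matrix m m ℂ} {B : Matrix n n ℂ}
    (hA : A.PosSemidef) (hB : B.PosSemidef) : (A ⊗ₖ B).PosSemidef := by
  exact hA.kronecker hB

lemma eig_quad_aux {A : Matrix n n ℂ} (hA : A.IsHermitian) {c : ℝ}
    (h1 : (Matrix.diagonal (fun _ => (c:ℂ)) - A).PosSemidef) (i : n) :
    hA.eigenvalues i ≤ c := by
  set v : n → ℂ := ⇑(hA.eigenvectorBasis i) with hv
  have hv0 : v ≠ 0 := by
    intro h
    have hb : hA.eigenvectorBasis i = 0 := by ext j; exact congrFun h j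
    have := hA.eigenvectorBasis.orthonormal.1 i
    rw [hb] at this; simp at this
  have hpos : 0 < star v ⬝ᵥ v := Matrix.dotProduct_star_self_pos_iff.mpr hv0
  have h := h1.dotProduct_mulVec_nonneg v
  have hmv : (Matrix.diagonal (fun _ => (c:ℂ)) - A) *ᵥ v = ((c:ℂ) - (hA.eigenvalues i : ℂ)) • v := by
    rw [Matrix.sub_mulVec, hA.mulVec_eigenvectorBasis]
    ext j
    have hvb : hA.eigenvectorBasis i j = v j := rfl
    simp [Matrix.mulVec_diagonal, Complex.real_smul, hvb]
    ring
  rw [hmv, dotProduct_smul] at h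
  have hpl := hpos.le
  rw [Complex.le_def] at hpl
  have him : (star v ⬝ᵥ v).im = 0 := by simpa using hpl.2.symm
  have hre : 0 < (star v ⬝ᵥ v).re := by
    rw [Complex.lt_def] at hpos; simpa using hpos.1
  rw [Complex.le_def] at h
  have := h.1
  simp [Complex.mul_re, him] at this
  nlinarith

lemma eig_quad_aux' {A : Matrix n n ℂ} (hA : A.IsHermitian) {c : ℝ}
    (h1 : (Matrix.diagonal (fun _ => (c:ℂ)) + A).PosSemidef) (i : n) :
    -c ≤ hA.eigenvalues i := by
  set v : n → ℂ := ⇑(hA.eigenvectorBasis i) with hv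
  have hv0 : v ≠ 0 := by
    intro h
    have hb : hA.eigenvectorBasis i = 0 := by ext j; exact congrFun h j
    have := hA.eigenvectorBasis.orthonormal.1 i
    rw [hb] at this; simp at this
  have hpos : 0 < star v ⬝ᵥ v := Matrix.dotProduct_star_self_pos_iff.mpr hv0
  have h := h1.dotProduct_mulVec_nonneg v
  have hmv : (Matrix.diagonal (fun _ => (c:ℂ)) + A) *ᵥ v = ((c:ℂ) + (hA.eigenvalues i : ℂ)) • v := by
    rw [Matrix.add_mulVec, hA.mulVec_eigenvectorBasis]
    ext j
    have hvb : hA.eigenvectorBasis i j = v j := rfl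
    simp [Matrix.mulVec_diagonal, Complex.real_smul, hvb]
    ring
  rw [hmv, dotProduct_smul] at h
  have hpl := hpos.le
  rw [Complex.le_def] at hpl
  have him : (star v ⬝ᵥ v).im = 0 := by simpa using hpl.2.symm
  have hre : 0 < (star v ⬝ᵥ v).re := by
    rw [Complex.lt_def] at hpos; simpa using hpos.1
  rw [Complex.le_def] at h
  have := h.1
  simp [Complex.mul_re, him] at this
  nlinarith

lemma eig_le_one {A : Matrix n n ℂ} (hA : A.IsHermitian) (h1 : (1 - A).PosSemidef) (i : n) :
    hA.eigenvalues i ≤ 1 := by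
  refine eig_quad_aux hA ?_ i
  simpa [Matrix.diagonal_one] using h1

lemma neg_one_le_eig {A : Matrix n n ℂ} (hA : A.IsHermitian) (h2 : (1 + A).PosSemidef) (i : n) :
    -1 ≤ hA.eigenvalues i := by
  have h := eig_quad_aux' hA (c := 1) ?_ i
  · simpa using h
  · simpa [Matrix.diagonal_one] using h2

lemma one_sub_sq_posSemidef {A : Matrix n n ℂ} (hA : A.IsHermitian)
    (h1 : (1 - A).PosSemidef) (h2 : (1 + A).PosSemidef) : (1 - A * A).PosSemidef := by
  have hbound : ∀ i, 0 ≤ 1 - hA.eigenvalues i ^ 2 := by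
    intro i
    have hle := eig_le_one hA h1 i
    have hge := neg_one_le_eig hA h2 i
    nlinarith
  set U : Matrix n n ℂ := (hA.eigenvectorUnitary : Matrix n n ℂ) with hU
  have hUU : U * star U = 1 := Matrix.mem_unitaryGroup_iff.mp hA.eigenvectorUnitary.2
  have hUU' : star U * U = 1 := Matrix.mem_unitaryGroup_iff'.mp hA.eigenvectorUnitary.2
  have hspec := hA.spectral_theorem
  rw [Unitary.conjStarAlgAut_apply, ← hU] at hspec
  set D := Matrix.diagonal (RCLike.ofReal ∘ hA.eigenvalues : n → ℂ) with hD
  have key : U * Matrix.diagonal (fun i => 1 - (hA.eigenvalues i : ℂ) ^ 2) * star U = 1 - A * A := by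
    have hDD : Matrix.diagonal (fun i => 1 - (hA.eigenvalues i : ℂ) ^ 2) = 1 - D * D := by
      rw [hD, Matrix.diagonal_mul_diagonal, ← Matrix.diagonal_one, Matrix.diagonal_sub]
      ext i; simp [sq]
    have e1 : (U * D * star U) * (U * D * star U) = U * (D * D) * star U := by
      simp only [Matrix.mul_assoc]
      rw [← Matrix.mul_assoc (star U) U (D * star U), hUU', Matrix.one_mul]
    rw [hDD, Matrix.mul_sub, Matrix.mul_one, Matrix.sub_mul, hUU, ← e1, ← hspec]
  rw [← key]
  have hdiag : (Matrix.diagonal (fun i => 1 - (hA.eigenvalues i : ℂ) ^ 2)).PosSemidef := by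
    refine Matrix.posSemidef_diagonal_iff.mpr fun i => ?_
    have hc : ((1 - hA.eigenvalues i ^ 2 : ℝ) : ℂ) = 1 - (hA.eigenvalues i : ℂ) ^ 2 := by
      push_cast; ring
    rw [← hc]
    exact Complex.zero_le_real.mpr (hbound i)
  have := hdiag.mul_mul_conjTranspose_same U
  rwa [← Matrix.star_eq_conjTranspose] at this

lemma sub_kron {l m p q : Type*} (X Y : Matrix l m ℂ) (Z : Matrix p q ℂ) :
    (X - Y) ⊗ₖ Z = X ⊗ₖ Z - Y ⊗ₖ Z := by
  ext ⟨i, j⟩ ⟨k, r⟩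
  simp [Matrix.kroneckerMap_apply, sub_mul]

lemma kron_sub {l m p q : Type*} (X : Matrix l m ℂ) (Y Z : Matrix p q ℂ) :
    X ⊗ₖ (Y - Z) = X ⊗ₖ Y - X ⊗ₖ Z := by
  ext ⟨i, j⟩ ⟨k, r⟩
  simp [Matrix.kroneckerMap_apply, mul_sub]

lemma sos_identity (s : ℂ) (hs : s * s = 2) (A0 A1 B0 B1 : Matrix (Fin 2) (Fin 2) ℂ) :
    (s • (A0 ⊗ₖ (1 : Matrix (Fin 2) (Fin 2) ℂ)) - (1 : Matrix (Fin 2) (Fin 2) ℂ) ⊗ₖ (B0 + B1)) *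
      (s • (A0 ⊗ₖ (1 : Matrix (Fin 2) (Fin 2) ℂ)) - (1 : Matrix (Fin 2) (Fin 2) ℂ) ⊗ₖ (B0 + B1))
    + (s • (A1 ⊗ₖ (1 : Matrix (Fin 2) (Fin 2) ℂ)) - (1 : Matrix (Fin 2) (Fin 2) ℂ) ⊗ₖ (B0 - B1)) *
      (s • (A1 ⊗ₖ (1 : Matrix (Fin 2) (Fin 2) ℂ)) - (1 : Matrix (Fin 2) (Fin 2) ℂ) ⊗ₖ (B0 - B1))
    + (2:ℂ) • ((1 - A0*A0) ⊗ₖ (1 : Matrix (Fin 2) (Fin 2) ℂ))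
    + (2:ℂ) • ((1 - A1*A1) ⊗ₖ (1 : Matrix (Fin 2) (Fin 2) ℂ))
    + (2:ℂ) • ((1 : Matrix (Fin 2) (Fin 2) ℂ) ⊗ₖ (1 - B0*B0))
    + (2:ℂ) • ((1 : Matrix (Fin 2) (Fin 2) ℂ) ⊗ₖ (1 - B1*B1))
    = (8:ℂ) • 1 - (2 * s) • (A0 ⊗ₖ B0 + A0 ⊗ₖ B1 + A1 ⊗ₖ B0 - A1 ⊗ₖ B1) := by
  simp only [Matrix.mul_sub, Matrix.sub_mul, smul_mul_assoc, mul_smul_comm, smul_smul, hs,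
    ← Matrix.mul_kronecker_mul, Matrix.one_mul, Matrix.mul_one, mul_add, add_mul, mul_sub, sub_mul,
    Matrix.add_kronecker, Matrix.kronecker_add, sub_kron, kron_sub, Matrix.one_kronecker_one,
    smul_add, smul_sub]
  module

end TsirelsonAux

/-- Tsirelson's bound: for any two-qubit density operator and dichotomic observables
(Hermitian with operator norm at most 1, encoded as `1 ± A` positive semidefinite),
the CHSH expectation is at most `2√2`. -/
theorem tsirelson_bound
    (ρ : Matrix (Fin 2 × Fin 2) (Fin 2 × Fin 2) ℂ)
    (hρ : ρ.PosSemidef) (hρtr : ρ.trace = 1)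
    (A B : Fin 2 → Matrix (Fin 2) (Fin 2) ℂ)
    (hA : ∀ x, (A x).IsHermitian) (hB : ∀ y, (B y).IsHermitian)
    (hA1 : ∀ x, (1 - A x).PosSemidef) (hA2 : ∀ x, (1 + A x).PosSemidef)
    (hB1 : ∀ y, (1 - B y).PosSemidef) (hB2 : ∀ y, (1 + B y).PosSemidef) :
    (Matrix.trace (ρ * (A 0 ⊗ₖ B 0 + A 0 ⊗ₖ B 1 + A 1 ⊗ₖ B 0 - A 1 ⊗ₖ B 1))).re
      ≤ 2 * Real.sqrt 2 := by
  set s : ℂ := (Real.sqrt 2 : ℂ) with hsdef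
  have hs : s * s = 2 := by
    rw [hsdef, ← Complex.ofReal_mul, Real.mul_self_sqrt (by norm_num)]
    norm_num
  set S : Matrix (Fin 2 × Fin 2) (Fin 2 × Fin 2) ℂ :=
    A 0 ⊗ₖ B 0 + A 0 ⊗ₖ B 1 + A 1 ⊗ₖ B 0 - A 1 ⊗ₖ B 1 with hS
  -- the SOS terms
  set P : Matrix (Fin 2 × Fin 2) (Fin 2 × Fin 2) ℂ :=
    s • (A 0 ⊗ₖ (1 : Matrix (Fin 2) (Fin 2) ℂ)) - (1 : Matrix (Fin 2) (Fin 2) ℂ) ⊗ₖ (B 0 + B 1)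
    with hP
  set Q : Matrix (Fin 2 × Fin 2) (Fin 2 × Fin 2) ℂ :=
    s • (A 1 ⊗ₖ (1 : Matrix (Fin 2) (Fin 2) ℂ)) - (1 : Matrix (Fin 2) (Fin 2) ℂ) ⊗ₖ (B 0 - B 1)
    with hQ
  have hPH : P.IsHermitian := by
    rw [Matrix.IsHermitian, hP, Matrix.conjTranspose_sub, Matrix.conjTranspose_smul,
      kron_conjTranspose, kron_conjTranspose, (hA 0).eq, Matrix.conjTranspose_one,
      Matrix.conjTranspose_add, (hB 0).eq, (hB 1).eq]
    congr 1
    rw [hsdef]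
    simp [Complex.star_def, Complex.conj_ofReal]
  have hQH : Q.IsHermitian := by
    rw [Matrix.IsHermitian, hQ, Matrix.conjTranspose_sub, Matrix.conjTranspose_smul,
      kron_conjTranspose, kron_conjTranspose, (hA 1).eq, Matrix.conjTranspose_one,
      Matrix.conjTranspose_sub, (hB 0).eq, (hB 1).eq]
    congr 1
    rw [hsdef]
    simp [Complex.star_def, Complex.conj_ofReal]
  have hPP : (P * P).PosSemidef := by
    have := Matrix.posSemidef_conjTranspose_mul_self P
    rwa [hPH.eq] at this
  have hQQ : (Q * Q).PosSemidef := by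
    have := Matrix.posSemidef_conjTranspose_mul_self Q
    rwa [hQH.eq] at this
  have hone : (1 : Matrix (Fin 2) (Fin 2) ℂ).PosSemidef := Matrix.PosSemidef.one
  have hAk : ∀ x, ((1 - A x * A x) ⊗ₖ (1 : Matrix (Fin 2) (Fin 2) ℂ)).PosSemidef := fun x =>
    kron_posSemidef (one_sub_sq_posSemidef (hA x) (hA1 x) (hA2 x)) hone
  have hBk : ∀ y, ((1 : Matrix (Fin 2) (Fin 2) ℂ) ⊗ₖ (1 - B y * B y)).PosSemidef := fun y =>
    kron_posSemidef hone (one_sub_sq_posSemidef (hB y) (hB1 y) (hB2 y))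
  have hsmul2 : ∀ (M : Matrix (Fin 2 × Fin 2) (Fin 2 × Fin 2) ℂ),
      M.PosSemidef → ((2:ℂ) • M).PosSemidef := by
    intro M hM
    rw [two_smul]
    exact hM.add hM
  have hMpsd : ((8:ℂ) • 1 - (2 * s) • S).PosSemidef := by
    rw [hS, ← sos_identity s hs (A 0) (A 1) (B 0) (B 1), ← hP, ← hQ]
    exact (((((hPP.add hQQ).add (hsmul2 _ (hAk 0))).add (hsmul2 _ (hAk 1))).add
      (hsmul2 _ (hBk 0))).add (hsmul2 _ (hBk 1)))
  have htr : 0 ≤ (ρ * ((8:ℂ) • 1 - (2 * s) • S)).trace := trace_mul_nonneg hρ hMpsd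
  have htr2 : (ρ * ((8:ℂ) • 1 - (2 * s) • S)).trace = 8 - (2 * s) * (ρ * S).trace := by
    rw [Matrix.mul_sub, Matrix.mul_smul, Matrix.mul_smul, Matrix.mul_one, Matrix.trace_sub,
      Matrix.trace_smul, Matrix.trace_smul, hρtr]
    simp
  rw [htr2, Complex.le_def] at htr
  have hre := htr.1
  set z : ℂ := (ρ * S).trace with hz
  have hsre : s.re = Real.sqrt 2 := by rw [hsdef]; simp
  have hsim : s.im = 0 := by rw [hsdef]; simp
  have hkey : 2 * Real.sqrt 2 * z.re ≤ 8 := by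
    have : (0:ℝ) ≤ (8 - 2 * s * z).re := by simpa using hre
    rw [Complex.sub_re, Complex.mul_re] at this
    simp [Complex.mul_re, Complex.mul_im, hsre, hsim] at this
    nlinarith
  have h2 : Real.sqrt 2 * Real.sqrt 2 = 2 := Real.mul_self_sqrt (by norm_num)
  have hpos : 0 < Real.sqrt 2 := Real.sqrt_pos.mpr (by norm_num)
  nlinarith [hkey, h2, hpos]
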